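/- If f : {0,1}^n → {0,1} is a nonconstant symmetric Boolean function (invariant under all permutations of input coordinates), then s(f) ≥ n/2. -/

import Mathlib

open Finset

/-- The sensitivity of `f` at input `x`: the number of coordinates whose flip changes `f`. -/
def sensAt {ι : Type} [Fintype ι] [DecidableEq ι] (f : (ι → Bool) → Bool) (x : ι → Bool) : ℕ :=
  (Finset.univ.filter fun i => f (Function.update x i (!x i)) ≠ f x).card

/-- The sensitivity of `f`: the maximum of `sensAt f x` over all inputs `x`. -/
def sensitivity {ι : Type} [Fintype ι] [DecidableEq ι] (f : (ι → Bool) → Bool) : ℕ :=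
  Finset.univ.sup fun x => sensAt f x

/-- Flip the coordinates of `x` in the block `B`. -/
def flipBlock {ι : Type} [DecidableEq ι] (x : ι → Bool) (B : Finset ι) : ι → Bool :=
  fun i => if i ∈ B then !x i else x i

/-- The block sensitivity of `f` at `x`. -/
noncomputable def blockSensAt {ι : Type} [Fintype ι] [DecidableEq ι] (f : (ι → Bool) → Bool)
    (x : ι → Bool) : ℕ :=
  sSup {r | ∃ B : Fin r → Finset ι,
    (∀ i j, i ≠ j → Disjoint (B i) (B j)) ∧ ∀ j, f (flipBlock x (B j)) ≠ f x}

/-- The block sensitivity of `f`. -/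
noncomputable def blockSens {ι : Type} [Fintype ι] [DecidableEq ι] (f : (ι → Bool) → Bool) : ℕ :=
  Finset.univ.sup fun x => blockSensAt f x

/-- The support of a partial assignment `p : ι → Option Bool`. -/
def psupport {ι : Type} [Fintype ι] [DecidableEq ι] (p : ι → Option Bool) : Finset ι :=
  Finset.univ.filter fun i => p i ≠ none

/-- `x` is consistent with the partial assignment `p`. -/
def consistentWith {ι : Type} (x : ι → Bool) (p : ι → Option Bool) : Prop :=
  ∀ i b, p i = some b → x i = b

/-- `p` is a `b`-certificate for `f`. -/
def isCertificate {ι : Type} (f : (ι → Bool) → Bool) (p : ι → Option Bool) (b : Bool) : Prop :=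
  ∀ x, consistentWith x p → f x = b

/-- The certificate complexity of `f` at `x`. -/
noncomputable def certAt {ι : Type} [Fintype ι] [DecidableEq ι] (f : (ι → Bool) → Bool) (x : ι → Bool) : ℕ :=
  sInf {c | ∃ p, consistentWith x p ∧ isCertificate f p (f x) ∧ (psupport p).card = c}

/-- The certificate complexity of `f`. -/
noncomputable def certC {ι : Type} [Fintype ι] [DecidableEq ι] (f : (ι → Bool) → Bool) : ℕ :=
  Finset.univ.sup fun x => certAt f x

/-- The `b`-sensitivity of `f`: max of `sensAt f x` over inputs `x` with `f x = b`. -/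
def sensB {ι : Type} [Fintype ι] [DecidableEq ι] (b : Bool) (f : (ι → Bool) → Bool) : ℕ :=
  (Finset.univ.filter fun x => f x = b).sup fun x => sensAt f x

/-- The `b`-certificate complexity of `f`. -/
noncomputable def certB {ι : Type} [Fintype ι] [DecidableEq ι] (b : Bool) (f : (ι → Bool) → Bool) : ℕ :=
  (Finset.univ.filter fun x => f x = b).sup fun x => certAt f x

/-- The partial assignment obtained by permuting the coordinates of `p` by `σ`. -/
def permP {ι : Type} (σ : Equiv.Perm ι) (p : ι → Option Bool) : ι → Option Bool :=
  fun i => p (σ i)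

/-- Distance between partial assignments: number of coordinates on which both are set
and they disagree. -/
def pdist {ι : Type} [Fintype ι] [DecidableEq ι] (p p' : ι → Option Bool) : ℕ :=
  (Finset.univ.filter fun i =>
    (p i = some true ∧ p' i = some false) ∨ (p i = some false ∧ p' i = some true)).card

/-- Edges of a `k`-uniform hypergraph on vertex set `Fin n`: `k`-element subsets. -/
def Edge (n k : ℕ) : Type := {S : Finset (Fin n) // S.card = k}

instance (n k : ℕ) : DecidableEq (Edge n k) := by unfold Edge; infer_instance
instance (n k : ℕ) : Fintype (Edge n k) := by unfold Edge; infer_instance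

/-- The action of a vertex permutation on edges. -/
def edgeMap {n k : ℕ} (σ : Equiv.Perm (Fin n)) (e : Edge n k) : Edge n k :=
  ⟨e.1.image σ, by rw [Finset.card_image_of_injective _ σ.injective]; exact e.2⟩

/-- `f` is a `k`-uniform hypergraph property: it is invariant under vertex permutations. -/
def IsHypergraphProperty {n k : ℕ} (f : (Edge n k → Bool) → Bool) : Prop :=
  ∀ (σ : Equiv.Perm (Fin n)) (x : Edge n k → Bool), f (fun e => x (edgeMap σ e)) = f x

/-- The number of edges of a hypergraph given by its edge-indicator vector. -/
def edgeCount {n k : ℕ} (G : Edge n k → Bool) : ℕ :=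
  (Finset.univ.filter fun e => G e = true).card

/-- The degree of a vertex `v` in the hypergraph `G`. -/
def degree {n k : ℕ} (G : Edge n k → Bool) (v : Fin n) : ℕ :=
  (Finset.univ.filter fun e : Edge n k => G e = true ∧ v ∈ e.1).card

/-- Invariance of a `k`-partite `k`-uniform hypergraph property under independent
permutations of each coordinate. -/
def IsPartiteProperty {n k : ℕ} (f : ((Fin k → Fin n) → Bool) → Bool) : Prop :=
  ∀ (σ : Fin k → Equiv.Perm (Fin n)) (x : (Fin k → Fin n) → Bool),
    f (fun e => x fun i => σ i (e i)) = f x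

-- weight
def wt {n : ℕ} (x : Fin n → Bool) : ℕ := (Finset.univ.filter fun i => x i = true).card

lemma wt_le {n : ℕ} (x : Fin n → Bool) : wt x ≤ n := by
  have := Finset.card_filter_le (univ : Finset (Fin n)) (fun i => x i = true)
  simpa [wt] using this

lemma card_filter_lt (n k : ℕ) (h : k ≤ n) :
    ((univ : Finset (Fin n)).filter (fun i => i.val < k)).card = k := by
  have hinj := Finset.card_image_of_injective ((univ : Finset (Fin n)).filter (fun i => i.val < k)) Fin.val_injective
  rw [← hinj]
  have himg : ((univ : Finset (Fin n)).filter (fun i => i.val < k)).image Fin.val = Finset.range k := by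
    ext m
    simp only [mem_image, mem_filter, mem_univ, true_and, mem_range]
    constructor
    · rintro ⟨i, hi, rfl⟩; exact hi
    · intro hm; exact ⟨⟨m, lt_of_lt_of_le hm h⟩, hm, rfl⟩
  rw [himg, card_range]

lemma card_filter_ge (n k : ℕ) (h : k ≤ n) :
    ((univ : Finset (Fin n)).filter (fun i => k ≤ i.val)).card = n - k := by
  have h1 := card_filter_lt n k h
  have h2 := Finset.card_filter_add_card_filter_not (s := (univ : Finset (Fin n))) (p := fun i => i.val < k)
  simp only [not_lt, card_univ, Fintype.card_fin] at h2
  omega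

-- same weight implies equal value for symmetric f
lemma eq_of_wt_eq {n : ℕ} (f : (Fin n → Bool) → Bool)
    (hsym : ∀ (σ : Equiv.Perm (Fin n)) (x : Fin n → Bool), f (fun i => x (σ i)) = f x)
    (x y : Fin n → Bool) (h : wt x = wt y) : f x = f y := by
  have hc1 : Fintype.card {i // x i = true} = Fintype.card {i // y i = true} := by
    simp only [Fintype.card_subtype]
    exact h
  have hc2 : Fintype.card {i // ¬ x i = true} = Fintype.card {i // ¬ y i = true} := by
    rw [Fintype.card_subtype_compl, Fintype.card_subtype_compl, hc1]
  let e₁ := Fintype.equivOfCardEq hc1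
  let e₂ := Fintype.equivOfCardEq hc2
  let σ : Equiv.Perm (Fin n) :=
    ((Equiv.sumCompl (fun i => x i = true)).symm.trans
      ((e₁.sumCongr e₂).trans (Equiv.sumCompl (fun i => y i = true))))
  have hxy : (fun i => y (σ i)) = x := by
    funext i
    by_cases hx : x i = true
    · have : σ i = (e₁ ⟨i, hx⟩ : {i // y i = true}) := by
        simp [σ, Equiv.sumCompl_symm_apply_of_pos (p := fun i => x i = true) hx]
      rw [this, hx]
      exact (e₁ ⟨i, hx⟩).2
    · have : σ i = (e₂ ⟨i, hx⟩ : {i // ¬ y i = true}) := by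
        simp [σ, Equiv.sumCompl_symm_apply_of_neg (p := fun i => x i = true) hx]
      rw [this]
      have h2 := (e₂ ⟨i, hx⟩).2
      simp only [Bool.not_eq_true] at hx h2
      rw [hx, h2]
  calc f x = f (fun i => y (σ i)) := by rw [hxy]
    _ = f y := hsym σ y

def ind (n k : ℕ) : Fin n → Bool := fun i => decide (i.val < k)

lemma wt_ind (n k : ℕ) (h : k ≤ n) : wt (ind n k) = k := by
  unfold wt ind
  simp only [decide_eq_true_eq]
  exact card_filter_lt n k h

lemma wt_update_false {n : ℕ} (x : Fin n → Bool) (i : Fin n) (h : x i = false) :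
    wt (Function.update x i true) = wt x + 1 := by
  unfold wt
  have : (univ.filter fun j => Function.update x i true j = true)
      = insert i (univ.filter fun j => x j = true) := by
    ext j
    by_cases hj : j = i
    · subst hj; simp [Function.update_self]
    · simp [Function.update_of_ne hj, hj]
  rw [this, Finset.card_insert_of_notMem (by simp [h])]

lemma wt_update_true {n : ℕ} (x : Fin n → Bool) (i : Fin n) (h : x i = true) :
    wt (Function.update x i false) + 1 = wt x := by
  unfold wt
  have : (univ.filter fun j => x j = true)
      = insert i (univ.filter fun j => Function.update x i false j = true) := by
    ext j
    by_cases hj : j = i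
    · subst hj; simp [h]
    · simp [Function.update_of_ne hj, hj]
  rw [this, Finset.card_insert_of_notMem (by simp)]


/-- a nonconstant symmetric Boolean function has sensitivity ≥ n/2. -/
theorem symmetric_sensitivity (n : ℕ) (f : (Fin n → Bool) → Bool)
    (hsym : ∀ (σ : Equiv.Perm (Fin n)) (x : Fin n → Bool), f (fun i => x (σ i)) = f x)
    (hnc : ∃ x y, f x ≠ f y) :
    (n : ℝ) / 2 ≤ (sensitivity f : ℝ) := by
  obtain ⟨x, y, hxy⟩ := hnc
  set g : ℕ → Bool := fun k => f (ind n k) with hg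
  have hval : ∀ z : Fin n → Bool, f z = g (wt z) := by
    intro z
    apply eq_of_wt_eq f hsym
    rw [wt_ind n (wt z) (wt_le z)]
  -- exists k < n with g k ≠ g (k+1)
  have hstep : ∃ k, k < n ∧ g k ≠ g (k + 1) := by
    by_contra hcon
    push_neg at hcon
    have hconst : ∀ k, k ≤ n → g k = g 0 := by
      intro k
      induction k with
      | zero => intro _; rfl
      | succ m ih =>
        intro hm
        rw [← hcon m (by omega), ih (by omega)]
    apply hxy
    rw [hval x, hval y, hconst _ (wt_le x), hconst _ (wt_le y)]
  obtain ⟨k, hk, hgk⟩ := hstep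
  -- lower bounds on sensAt
  have hb1 : n - k ≤ sensAt f (ind n k) := by
    rw [← card_filter_ge n k (le_of_lt hk)]
    unfold sensAt
    apply Finset.card_le_card
    intro i hi
    simp only [mem_filter, mem_univ, true_and] at hi ⊢
    have hxi : ind n k i = false := by simp [ind]; omega
    rw [hxi]
    simp only [Bool.not_false]
    rw [hval (Function.update (ind n k) i true), hval (ind n k),
      wt_update_false _ _ hxi, wt_ind n k (le_of_lt hk)]
    exact fun h => hgk h.symm
  have hb2 : k + 1 ≤ sensAt f (ind n (k + 1)) := by
    have hsub : ((univ : Finset (Fin n)).filter (fun i => i.val < k + 1)).card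
        ≤ sensAt f (ind n (k + 1)) := by
      unfold sensAt
      apply Finset.card_le_card
      intro i hi
      simp only [mem_filter, mem_univ, true_and] at hi ⊢
      have hxi : ind n (k + 1) i = true := by simp [ind]; omega
      rw [hxi]
      simp only [Bool.not_true]
      rw [hval (Function.update (ind n (k + 1)) i false), hval (ind n (k + 1)),
        wt_ind n (k + 1) hk]
      have := wt_update_true (ind n (k + 1)) i hxi
      rw [wt_ind n (k + 1) hk] at this
      have hw : wt (Function.update (ind n (k + 1)) i false) = k := by omega
      rw [hw]
      exact hgk
    rwa [card_filter_lt n (k + 1) hk] at hsub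
  have hs1 : n - k ≤ sensitivity f := le_trans hb1 (Finset.le_sup (Finset.mem_univ _))
  have hs2 : k + 1 ≤ sensitivity f := le_trans hb2 (Finset.le_sup (Finset.mem_univ _))
  have : n ≤ 2 * sensitivity f := by omega
  have := Nat.cast_le (α := ℝ) |>.mpr this
  push_cast at this
  linarith
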